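/- Let s ⊂ gl_n(F) be a Cartan subalgebra, let x ∈ ℚ^n, let E = k((u)) with u^e = z be a finite extension of F over which s splits, and let g ∈ GL_n(E) satisfy g^{-1}·s(E)·g = t(E), where s(E) is the E-span of s and t(E) the diagonal matrices over E. Then (τ + ad(x̃))(s) ⊆ s if and only if g^{-1}·x̃·g + g^{-1}·τ(g) ∈ t(E). -/

import Mathlib

noncomputable section

open Polynomial Matrix

attribute [local instance 100] LieRing.ofAssociativeRing

variable {k : Type*} [Field k]

/-- The derivation `τ = z·d/dz` on `k((z))`, acting coefficientwise by `n`. -/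
def tauF (f : LaurentSeries k) : LaurentSeries k :=
  ⟨fun n => (n : k) * f.coeff n,
    f.isPWO_support'.mono (fun n hn => by
      simp only [Function.mem_support, ne_eq] at hn ⊢
      exact fun h => hn (by rw [h, mul_zero]))⟩

/-- The derivation `τ = (1/e)·u·d/du` on `E = k((u))` (where `u^e = z`),
acting coefficientwise by `n/e`. -/
def tauU (e : ℕ) (f : LaurentSeries k) : LaurentSeries k :=
  ⟨fun n => ((n : k) / (e : k)) * f.coeff n,
    f.isPWO_support'.mono (fun n hn => by
      simp only [Function.mem_support, ne_eq] at hn ⊢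
      exact fun h => hn (by rw [h, mul_zero]))⟩

/-- For `x ∈ ℚ^n`, the constant diagonal matrix `x̃ = diag(x₁, …, xₙ)`. -/
def diagQ {n : ℕ} (x : Fin n → ℚ) : Matrix (Fin n) (Fin n) (LaurentSeries k) :=
  Matrix.diagonal fun i => HahnSeries.C ((x i : k))

/-- A Cartan subalgebra of `gl_n(F)`: a commutative, self-normalizing Lie subalgebra. -/
def IsCartanLS {n : ℕ} (s : LieSubalgebra (LaurentSeries k)
    (Matrix (Fin n) (Fin n) (LaurentSeries k))) : Prop :=
  (∀ a ∈ s, ∀ b ∈ s, a * b = b * a) ∧ s.normalizer = s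

/-- The inclusion `F = k((z)) →+* E = k((u))`, `z ↦ u^e`. -/
def zmap (e : ℕ) (he : 0 < e) : LaurentSeries k →+* LaurentSeries k :=
  HahnSeries.embDomainRingHom (AddMonoidHom.mk' (fun m : ℤ => (e : ℤ) * m) (by intro a b; ring))
    (fun a b hab => by
      have : (e : ℤ) ≠ 0 := by exact_mod_cast he.ne'
      exact mul_left_cancel₀ this hab)
    (fun a b => by
      constructor
      · intro h
        exact le_of_mul_le_mul_left h (by exact_mod_cast he)
      · intro h
        exact mul_le_mul_of_nonneg_left h (by positivity))

/-- The set `t(E)` of diagonal matrices. -/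
def diagSet (n : ℕ) : Set (Matrix (Fin n) (Fin n) (LaurentSeries k)) :=
  {A | ∀ i j, i ≠ j → A i j = 0}

@[simp] lemma tauU_coeff (e : ℕ) (f : LaurentSeries k) (n : ℤ) :
    (tauU e f).coeff n = ((n : k) / (e : k)) * f.coeff n := rfl

lemma tauU_add (e : ℕ) (f g : LaurentSeries k) :
    tauU e (f + g) = tauU e f + tauU e g := by
  ext n
  simp [mul_add]

@[simp] lemma tauU_zero (e : ℕ) : tauU e (0 : LaurentSeries k) = 0 := by
  ext n; simp

lemma tauU_mul (e : ℕ) (f g : LaurentSeries k) :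
    tauU e (f * g) = tauU e f * g + f * tauU e g := by
  ext n
  have hf : (tauU e f).support ⊆ f.support := fun m hm => by
    rw [HahnSeries.mem_support] at hm ⊢
    exact fun h => hm (by rw [tauU_coeff, h, mul_zero])
  have hg : (tauU e g).support ⊆ g.support := fun m hm => by
    rw [HahnSeries.mem_support] at hm ⊢
    exact fun h => hm (by rw [tauU_coeff, h, mul_zero])
  rw [HahnSeries.coeff_add, HahnSeries.coeff_mul_left' f.isPWO_support hf,
    HahnSeries.coeff_mul_right' g.isPWO_support hg, tauU_coeff, HahnSeries.coeff_mul,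
    Finset.mul_sum, ← Finset.sum_add_distrib]
  refine Finset.sum_congr rfl fun ij hij => ?_
  rw [Finset.mem_addAntidiagonal] at hij
  obtain ⟨-, -, h⟩ := hij
  rw [tauU_coeff, tauU_coeff, ← h]
  push_cast
  ring

lemma zmap_coeff (e : ℕ) (he : 0 < e) (f : LaurentSeries k) (a : ℤ) :
    (zmap e he f).coeff ((e : ℤ) * a) = f.coeff a := by
  show (HahnSeries.embDomain _ f).coeff _ = _
  exact HahnSeries.embDomain_mk_coeff _ _

lemma zmap_coeff_ne (e : ℕ) (he : 0 < e) (f : LaurentSeries k) (m : ℤ)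
    (h : ∀ a : ℤ, (e : ℤ) * a ≠ m) : (zmap e he f).coeff m = 0 := by
  show (HahnSeries.embDomain _ f).coeff _ = _
  exact HahnSeries.embDomain_notin_range (by rintro ⟨a, rfl⟩; exact h a rfl)

lemma zmap_support (e : ℕ) (he : 0 < e) (f : LaurentSeries k) {m : ℤ}
    (hm : m ∈ (zmap e he f).support) : ∃ a ∈ f.support, (e : ℤ) * a = m := by
  by_contra hcon
  push_neg at hcon
  rw [HahnSeries.mem_support] at hm
  apply hm
  by_cases hr : ∃ a : ℤ, (e : ℤ) * a = m
  · obtain ⟨a, rfl⟩ := hr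
    rw [zmap_coeff]
    have := hcon a
    by_contra hne
    exact (this (HahnSeries.mem_support _ _ |>.mpr hne)) rfl
  · push_neg at hr
    exact zmap_coeff_ne e he f m hr

lemma zmap_tauF [CharZero k] (e : ℕ) (he : 0 < e) (f : LaurentSeries k) :
    zmap e he (tauF f) = tauU e (zmap e he f) := by
  ext m
  by_cases hr : ∃ a : ℤ, (e : ℤ) * a = m
  · obtain ⟨a, rfl⟩ := hr
    rw [zmap_coeff, tauU_coeff, zmap_coeff]
    show (a : k) * f.coeff a = _
    have he' : (e : k) ≠ 0 := Nat.cast_ne_zero.mpr he.ne'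
    push_cast
    field_simp
  · push_neg at hr
    rw [zmap_coeff_ne e he _ _ hr, tauU_coeff, zmap_coeff_ne e he _ _ hr, mul_zero]

lemma zmap_C (e : ℕ) (he : 0 < e) (c : k) :
    zmap e he (HahnSeries.C c) = HahnSeries.C c :=
  HahnSeries.embDomainRingHom_C

def piE (e : ℕ) (he : 0 < e) (f : LaurentSeries k) : LaurentSeries k :=
  ⟨fun n => f.coeff ((e : ℤ) * n), by
    rw [Set.isPWO_iff_isWF, Set.isWF_iff_no_descending_seq]
    intro φ hφ hmem
    have hwf := f.isPWO_support'
    rw [Set.isPWO_iff_isWF, Set.isWF_iff_no_descending_seq] at hwf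
    refine hwf (fun n => (e : ℤ) * φ n) (fun a b hab => ?_) hmem
    have he' : (0 : ℤ) < (e : ℤ) := by exact_mod_cast he
    exact mul_lt_mul_of_pos_left (hφ hab) he'⟩

@[simp] lemma piE_coeff (e : ℕ) (he : 0 < e) (f : LaurentSeries k) (n : ℤ) :
    (piE e he f).coeff n = f.coeff ((e : ℤ) * n) := rfl

lemma piE_zmap (e : ℕ) (he : 0 < e) (f : LaurentSeries k) :
    piE e he (zmap e he f) = f := by
  ext n; rw [piE_coeff, zmap_coeff]

lemma piE_zmap_mul (e : ℕ) (he : 0 < e) (f c : LaurentSeries k) :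
    piE e he (zmap e he f * c) = f * piE e he c := by
  ext n
  rw [piE_coeff, HahnSeries.coeff_mul, HahnSeries.coeff_mul]
  refine (Finset.sum_bij (fun (p : ℤ × ℤ) _ => ((e : ℤ) * p.1, (e : ℤ) * p.2)) ?_ ?_ ?_ ?_).symm
  · rintro ⟨a, b⟩ hab
    rw [Finset.mem_addAntidiagonal] at hab ⊢
    obtain ⟨h1, h2, h3⟩ := hab
    refine ⟨?_, ?_, by dsimp only; rw [← h3]; ring⟩
    · rw [HahnSeries.mem_support, zmap_coeff]
      exact HahnSeries.mem_support _ _ |>.mp h1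
    · rw [HahnSeries.mem_support]
      rw [HahnSeries.mem_support, piE_coeff] at h2
      exact h2
  · intro p hp q hq h
    have he' : (e : ℤ) ≠ 0 := by positivity
    rw [Prod.mk.injEq] at h
    exact Prod.ext (mul_left_cancel₀ he' h.1) (mul_left_cancel₀ he' h.2)
  · rintro ⟨i, j⟩ hij
    rw [Finset.mem_addAntidiagonal] at hij
    obtain ⟨h1, h2, h3⟩ := hij
    obtain ⟨a, ha, rfl⟩ := zmap_support e he f h1
    have h3' : (e : ℤ) * a + j = (e : ℤ) * n := h3
    have hj : j = (e : ℤ) * (n - a) := by rw [mul_sub]; linarith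
    refine ⟨(a, n - a), ?_, by dsimp only; rw [← hj]⟩
    rw [Finset.mem_addAntidiagonal]
    refine ⟨ha, ?_, by ring⟩
    rw [HahnSeries.mem_support, piE_coeff, ← hj]
    exact HahnSeries.mem_support _ _ |>.mp h2
  · rintro ⟨a, b⟩ -
    dsimp only
    rw [zmap_coeff, piE_coeff]

lemma piE_add (e : ℕ) (he : 0 < e) (f g : LaurentSeries k) :
    piE e he (f + g) = piE e he f + piE e he g := by
  ext n; simp

section MatrixLemmas

variable {n : ℕ} (e : ℕ)

local notation "M" => Matrix (Fin n) (Fin n) (LaurentSeries k)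

def tauUHom (e : ℕ) : LaurentSeries k →+ LaurentSeries k where
  toFun := tauU e
  map_zero' := tauU_zero e
  map_add' := tauU_add e

lemma mapTau_add (A B : M) :
    (A + B).map (tauU e) = A.map (tauU e) + B.map (tauU e) := by
  ext i j
  simp [tauU_add]

lemma mapTau_mul (A B : M) :
    (A * B).map (tauU e) = A.map (tauU e) * B + A * B.map (tauU e) := by
  refine Matrix.ext fun i j => ?_
  show tauUHom e (∑ l, A i l * B l j) = _
  rw [map_sum]
  simp only [Matrix.add_apply, Matrix.mul_apply, ← Finset.sum_add_distrib]
  refine Finset.sum_congr rfl fun l _ => ?_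
  show tauU e (A i l * B l j) = _
  rw [tauU_mul]
  rfl

lemma mapTau_smul (c : LaurentSeries k) (A : M) :
    ((c • A).map (tauU e)) = tauU e c • A + c • A.map (tauU e) := by
  ext i j
  simp only [Matrix.map_apply, Matrix.smul_apply, Matrix.add_apply, smul_eq_mul]
  rw [tauU_mul]

end MatrixLemmas

/-- Abstract conjugation identity for derivations on a ring. -/
lemma conj_deriv {R : Type*} [Ring R] (D : R → R)
    (hD : ∀ a b, D (a * b) = D a * b + a * D b)
    (g h : R) (h1 : g * h = 1) (h2 : h * g = 1) (m : R) :
    g * (D (h * m * g) + (h * D g) * (h * m * g) - (h * m * g) * (h * D g)) * h = D m := by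
  have hone : D 1 = 0 := by
    have h' := hD 1 1
    simp only [one_mul, mul_one] at h'
    exact (left_eq_add.mp h')
  have hDh : D h = -(h * D g * h) := by
    have e0 : D g * h + g * D h = 0 := by rw [← hD, h1, hone]
    have e1 : g * D h = -(D g * h) := eq_neg_of_add_eq_zero_right e0
    calc D h = (h * g) * D h := by rw [h2, one_mul]
    _ = h * (g * D h) := by rw [mul_assoc]
    _ = h * (-(D g * h)) := by rw [e1]
    _ = -(h * D g * h) := by noncomm_ring
  have key : D (h * m * g) + (h * D g) * (h * m * g) - (h * m * g) * (h * D g)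
      = h * D m * g := by
    rw [hD (h * m) g, hD h m, hDh]
    have e1 : (h * m * g) * (h * D g) = (h * m) * ((g * h) * D g) := by noncomm_ring
    rw [e1, h1, one_mul]
    noncomm_ring
  rw [key]
  calc g * (h * D m * g) * h = (g * h) * D m * (g * h) := by noncomm_ring
  _ = D m := by rw [h1, one_mul, mul_one]

section Main

variable {n : ℕ}

local notation "M" => Matrix (Fin n) (Fin n) (LaurentSeries k)

lemma diagSet_mul_comm {A B : M} (hA : A ∈ diagSet n) (hB : B ∈ diagSet n) :
    A * B = B * A := by
  refine Matrix.ext fun i j => ?_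
  rw [Matrix.mul_apply, Matrix.mul_apply]
  refine Finset.sum_congr rfl fun l _ => ?_
  by_cases hil : i = l
  · subst hil
    by_cases hij : i = j
    · subst hij; ring
    · rw [hB _ _ hij, hA _ _ hij, mul_zero, mul_zero]
  · rw [hA _ _ hil, hB _ _ hil, zero_mul, zero_mul]

lemma diagSet_map_tau (e : ℕ) {A : M} (hA : A ∈ diagSet n) :
    A.map (tauU e) ∈ diagSet n := fun i j hij => by
  rw [Matrix.map_apply, hA i j hij, tauU_zero]

/-- The Leibniz rule for `D A = τ(A) + [x̃, A]`. -/
lemma DE_mul (e : ℕ) (x : Fin n → ℚ) (A B : M) :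
    (A * B).map (tauU e) + diagQ x * (A * B) - (A * B) * diagQ x
      = (A.map (tauU e) + diagQ x * A - A * diagQ x) * B
        + A * (B.map (tauU e) + diagQ x * B - B * diagQ x) := by
  rw [mapTau_mul]
  simp only [mul_add, add_mul, sub_mul, mul_sub, mul_assoc]
  abel

end Main

section Main2

variable {n : ℕ}

local notation "M" => Matrix (Fin n) (Fin n) (LaurentSeries k)

lemma sandwich {R : Type*} [Ring R] (g h : R) (h1 : g * h = 1) (h2 : h * g = 1) (W : R) :
    h * (g * W * h) * g = W := by
  calc h * (g * W * h) * g = (h * g) * W * (h * g) := by noncomm_ring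
  _ = W := by rw [h2, one_mul, mul_one]

lemma sandwich' {R : Type*} [Ring R] (g h : R) (h1 : g * h = 1) (h2 : h * g = 1) (W : R) :
    g * (h * W * g) * h = W := sandwich h g h2 h1 W

lemma mapTau_zero (e : ℕ) : ((0 : M).map (tauU e)) = 0 := by
  ext i j
  simp [Matrix.map_apply]

lemma mapZ_diagQ (e : ℕ) (he : 0 < e) (x : Fin n → ℚ) :
    ((diagQ x : M).map (zmap e he)) = diagQ x := by
  refine Matrix.ext fun i j => ?_
  rw [Matrix.map_apply, diagQ]
  by_cases hij : i = j
  · subst hij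
    rw [Matrix.diagonal_apply_eq]
    exact zmap_C e he _
  · rw [Matrix.diagonal_apply_ne _ hij]
    exact map_zero _

lemma phi_DF [CharZero k] (e : ℕ) (he : 0 < e) (x : Fin n → ℚ) (a : M) :
    (a.map tauF + diagQ x * a - a * diagQ x).map (zmap e he)
      = (a.map (zmap e he)).map (tauU e) + diagQ x * a.map (zmap e he)
        - a.map (zmap e he) * diagQ x := by
  have hτ : ((a.map tauF).map (zmap e he) : M) = (a.map (zmap e he)).map (tauU e) := by
    refine Matrix.ext fun i j => ?_
    simp only [Matrix.map_apply]
    exact zmap_tauF e he (a i j)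
  calc (a.map tauF + diagQ x * a - a * diagQ x).map (zmap e he)
      = (zmap e he).mapMatrix (a.map tauF + diagQ x * a - a * diagQ x) := rfl
    _ = (zmap e he).mapMatrix (a.map tauF)
        + (zmap e he).mapMatrix (diagQ x) * (zmap e he).mapMatrix a
        - (zmap e he).mapMatrix a * (zmap e he).mapMatrix (diagQ x) := by
        rw [map_sub, map_add, _root_.map_mul, _root_.map_mul]
    _ = _ := by
        show (a.map tauF).map (zmap e he)
            + ((diagQ x).map (zmap e he) : M) * a.map (zmap e he)
            - a.map (zmap e he) * ((diagQ x).map (zmap e he)) = _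
        rw [hτ, mapZ_diagQ]

lemma descent [CharZero k] (e : ℕ) (he : 0 < e)
    (s : LieSubalgebra (LaurentSeries k) M) (w : M)
    (hw : w.map (zmap e he) ∈ Submodule.span (LaurentSeries k)
      ((fun A : M => A.map (zmap e he)) '' (s : Set M))) : w ∈ s := by
  have key := Submodule.span_induction
    (p := fun m (_ : m ∈ Submodule.span (LaurentSeries k)
      ((fun A : M => A.map (zmap e he)) '' (s : Set M))) =>
      ∀ c : LaurentSeries k, ((c • m).map (piE e he)) ∈ s)
    ?_ ?_ ?_ ?_ hw
  · have h1 := key 1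
    rw [one_smul] at h1
    have h2 : ((w.map (zmap e he)).map (piE e he)) = w := by
      refine Matrix.ext fun i j => ?_
      simp only [Matrix.map_apply]
      exact piE_zmap e he (w i j)
    rwa [h2] at h1
  · rintro m ⟨a, ha, rfl⟩ c
    have : ((c • (a.map (zmap e he) : M)).map (piE e he)) = piE e he c • a := by
      refine Matrix.ext fun i j => ?_
      simp only [Matrix.map_apply, Matrix.smul_apply, smul_eq_mul]
      rw [mul_comm c, piE_zmap_mul, mul_comm]
    rw [this]
    exact s.smul_mem _ ha
  · intro c
    rw [smul_zero]
    have : ((0 : M).map (piE e he)) = 0 := by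
      refine Matrix.ext fun i j => ?_
      simp only [Matrix.map_apply, Matrix.zero_apply]
      ext m; simp
    rw [this]
    exact s.zero_mem
  · intro m1 m2 hm1 hm2 ih1 ih2 c
    rw [smul_add]
    have : ((c • m1 + c • m2 : M).map (piE e he))
        = (c • m1 : M).map (piE e he) + (c • m2 : M).map (piE e he) := by
      refine Matrix.ext fun i j => ?_
      simp only [Matrix.map_apply, Matrix.add_apply]
      exact piE_add e he ((c • m1 : M) i j) ((c • m2 : M) i j)
    rw [this]
    exact s.add_mem (ih1 c) (ih2 c)
  · intro d m hm ih c
    rw [smul_smul]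
    exact ih (c * d)

end Main2

section Main3

variable {n : ℕ}

local notation "M" => Matrix (Fin n) (Fin n) (LaurentSeries k)

lemma conj_formula (e : ℕ) (x : Fin n → ℚ) (g : M) (hg : IsUnit g.det) (m : M) :
    g⁻¹ * (m.map (tauU e) + diagQ x * m - m * diagQ x) * g
      = (g⁻¹ * m * g).map (tauU e)
        + (g⁻¹ * diagQ x * g + g⁻¹ * g.map (tauU e)) * (g⁻¹ * m * g)
        - (g⁻¹ * m * g) * (g⁻¹ * diagQ x * g + g⁻¹ * g.map (tauU e)) := by
  have h1 : g * g⁻¹ = 1 := Matrix.mul_nonsing_inv g hg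
  have h2 : g⁻¹ * g = 1 := Matrix.nonsing_inv_mul g hg
  set D : M → M := fun A => A.map (tauU e) + diagQ x * A - A * diagQ x with hDdef
  have hD : ∀ A B : M, D (A * B) = D A * B + A * D B := fun A B => DE_mul e x A B
  have habs := conj_deriv D hD g g⁻¹ h1 h2 m
  have hswap : g⁻¹ * D m * g
      = D (g⁻¹ * m * g) + (g⁻¹ * D g) * (g⁻¹ * m * g) - (g⁻¹ * m * g) * (g⁻¹ * D g) := by
    rw [← habs]
    exact sandwich g g⁻¹ h1 h2 _
  have hY : g⁻¹ * D g = (g⁻¹ * diagQ x * g + g⁻¹ * g.map (tauU e)) - diagQ x := by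
    show g⁻¹ * (g.map (tauU e) + diagQ x * g - g * diagQ x) = _
    calc g⁻¹ * (g.map (tauU e) + diagQ x * g - g * diagQ x)
        = g⁻¹ * g.map (tauU e) + g⁻¹ * (diagQ x * g) - g⁻¹ * (g * diagQ x) := by
          rw [mul_sub, mul_add]
    _ = g⁻¹ * g.map (tauU e) + g⁻¹ * diagQ x * g - (g⁻¹ * g) * diagQ x := by
          rw [← mul_assoc, ← mul_assoc]
    _ = _ := by rw [h2, one_mul]; abel
  show g⁻¹ * D m * g = _
  rw [hswap, hY]
  show (g⁻¹ * m * g).map (tauU e) + diagQ x * (g⁻¹ * m * g) - (g⁻¹ * m * g) * diagQ x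
      + _ - _ = _
  rw [sub_mul, mul_sub]
  abel

set_option maxHeartbeats 1000000 in
set_option synthInstance.maxHeartbeats 400000 in
lemma span_stable [CharZero k] (e : ℕ) (he : 0 < e) (x : Fin n → ℚ)
    (s : LieSubalgebra (LaurentSeries k) M)
    (H : ∀ a ∈ s, a.map tauF + diagQ x * a - a * diagQ x ∈ s) :
    ∀ m ∈ Submodule.span (LaurentSeries k)
      ((fun A : M => A.map (zmap e he)) '' (s : Set M)),
      m.map (tauU e) + diagQ x * m - m * diagQ x ∈ Submodule.span (LaurentSeries k)
        ((fun A : M => A.map (zmap e he)) '' (s : Set M)) := by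
  intro m hm
  refine Submodule.span_induction
    (p := fun m (_ : m ∈ Submodule.span (LaurentSeries k)
      ((fun A : M => A.map (zmap e he)) '' (s : Set M))) =>
      m.map (tauU e) + diagQ x * m - m * diagQ x ∈ Submodule.span (LaurentSeries k)
        ((fun A : M => A.map (zmap e he)) '' (s : Set M)))
    ?_ ?_ ?_ ?_ hm
  · rintro _ ⟨a, ha, rfl⟩
    rw [← phi_DF e he x a]
    exact Submodule.subset_span ⟨_, H a ha, rfl⟩
  · simp only [mapTau_zero, mul_zero, zero_mul, add_zero, sub_zero]
    exact Submodule.zero_mem _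
  · intro m1 m2 hm1 hm2 ih1 ih2
    have : (m1 + m2 : M).map (tauU e) + diagQ x * (m1 + m2) - (m1 + m2) * diagQ x
        = (m1.map (tauU e) + diagQ x * m1 - m1 * diagQ x)
          + (m2.map (tauU e) + diagQ x * m2 - m2 * diagQ x) := by
      rw [mapTau_add]
      noncomm_ring
    rw [this]
    exact Submodule.add_mem _ ih1 ih2
  · intro c m hmm ih
    have : (c • m : M).map (tauU e) + diagQ x * (c • m) - (c • m) * diagQ x
        = tauU e c • m + c • (m.map (tauU e) + diagQ x * m - m * diagQ x) := by
      have hc1 : diagQ x * (c • m) = c • (diagQ x * m) := Matrix.mul_smul _ c m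
      have hc2 : (c • m) * diagQ x = c • (m * diagQ x) := Matrix.smul_mul c m _
      have hc3 : c • (m.map (tauU e) + diagQ x * m - m * diagQ x)
          = c • m.map (tauU e) + c • (diagQ x * m) - c • (m * diagQ x) := by
        refine Matrix.ext fun i j => ?_
        simp only [Matrix.smul_apply, Matrix.add_apply, Matrix.sub_apply, smul_eq_mul]
        ring
      rw [mapTau_smul, hc1, hc2, hc3]
      abel
    rw [this]
    exact Submodule.add_mem _ (Submodule.smul_mem _ _ hmm) (Submodule.smul_mem _ _ ih)

end Main3

/-- for a Cartan subalgebra `s ⊆ gl_n(F)`, a point `x ∈ ℚ^n`, a splitting field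
`E = k((u))` with `u^e = z` and `g ∈ GL_n(E)` with `g⁻¹·s(E)·g = t(E)`, one has
`(τ + ad x̃)(s) ⊆ s` iff `g⁻¹·x̃·g + g⁻¹·τ(g) ∈ t(E)`. -/
theorem stmt0 [IsAlgClosed k] [CharZero k] {n : ℕ} (e : ℕ) (he : 0 < e)
    (s : LieSubalgebra (LaurentSeries k) (Matrix (Fin n) (Fin n) (LaurentSeries k)))
    (hs : IsCartanLS s) (x : Fin n → ℚ)
    (g : Matrix (Fin n) (Fin n) (LaurentSeries k)) (hg : IsUnit g.det)
    (hdiag : (fun A => g⁻¹ * A * g) ''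
        ((Submodule.span (LaurentSeries k)
          ((fun A : Matrix (Fin n) (Fin n) (LaurentSeries k) =>
            A.map (zmap e he)) '' (s : Set (Matrix (Fin n) (Fin n) (LaurentSeries k))))) :
              Set (Matrix (Fin n) (Fin n) (LaurentSeries k)))
      = diagSet n) :
    (∀ a ∈ s, a.map tauF + diagQ x * a - a * diagQ x ∈ s) ↔
      g⁻¹ * diagQ x * g + g⁻¹ * (g.map (tauU e)) ∈ diagSet n := by
  have h1 : g * g⁻¹ = 1 := Matrix.mul_nonsing_inv g hg
  have h2 : g⁻¹ * g = 1 := Matrix.nonsing_inv_mul g hg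
  have hd1 : ∀ m : Matrix (Fin n) (Fin n) (LaurentSeries k),
      m ∈ Submodule.span (LaurentSeries k)
        ((fun A : Matrix (Fin n) (Fin n) (LaurentSeries k) =>
          A.map (zmap e he)) '' (s : Set (Matrix (Fin n) (Fin n) (LaurentSeries k)))) →
      g⁻¹ * m * g ∈ diagSet n := by
    intro m hm
    rw [← hdiag]
    exact ⟨m, hm, rfl⟩
  have hsurj : ∀ d ∈ diagSet n, ∃ m ∈ Submodule.span (LaurentSeries k)
      ((fun A : Matrix (Fin n) (Fin n) (LaurentSeries k) =>
        A.map (zmap e he)) '' (s : Set (Matrix (Fin n) (Fin n) (LaurentSeries k)))),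
      g⁻¹ * m * g = d := by
    intro d hd
    rw [← hdiag] at hd
    obtain ⟨m, hm, hmd⟩ := hd
    exact ⟨m, hm, hmd⟩
  constructor
  · intro H
    have goal : ∀ i j : Fin n, i ≠ j →
        ((g⁻¹ * diagQ x * g + g⁻¹ * (g.map (tauU e)) :
          Matrix (Fin n) (Fin n) (LaurentSeries k))) i j = 0 := by
      intro i j hij
      set b : Matrix (Fin n) (Fin n) (LaurentSeries k) :=
        Matrix.diagonal (fun l => if l = j then (1 : LaurentSeries k) else 0) with hbdef
      have hb : b ∈ diagSet n := fun i' j' h' => Matrix.diagonal_apply_ne _ h'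
      obtain ⟨m, hm, hmb⟩ := hsurj b hb
      have hDm := span_stable e he x s H m hm
      have hdg := hd1 _ hDm
      have hconj := conj_formula e x g hg m
      rw [hmb] at hconj
      rw [hconj] at hdg
      have h0 := hdg i j hij
      simp only [Matrix.sub_apply, Matrix.add_apply, Matrix.map_apply, hbdef,
        Matrix.mul_diagonal, Matrix.diagonal_mul, Matrix.diagonal_apply_ne _ hij,
        tauU_zero, if_neg hij, eq_self_iff_true, if_true, mul_one, zero_mul,
        zero_add, sub_zero] at h0
      exact h0
    exact goal
  · intro hX a ha
    have hm : (a.map (zmap e he) : Matrix (Fin n) (Fin n) (LaurentSeries k))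
        ∈ Submodule.span (LaurentSeries k)
        ((fun A : Matrix (Fin n) (Fin n) (LaurentSeries k) =>
          A.map (zmap e he)) '' (s : Set (Matrix (Fin n) (Fin n) (LaurentSeries k)))) :=
      Submodule.subset_span ⟨a, ha, rfl⟩
    have hb : g⁻¹ * a.map (zmap e he) * g ∈ diagSet n := hd1 _ hm
    have hW : (g⁻¹ * a.map (zmap e he) * g).map (tauU e)
        + (g⁻¹ * diagQ x * g + g⁻¹ * g.map (tauU e)) * (g⁻¹ * a.map (zmap e he) * g)
        - (g⁻¹ * a.map (zmap e he) * g) * (g⁻¹ * diagQ x * g + g⁻¹ * g.map (tauU e))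
        ∈ diagSet n := by
      rw [diagSet_mul_comm hX hb, add_sub_cancel_right]
      exact diagSet_map_tau e hb
    obtain ⟨m', hm', hm'W⟩ := hsurj _ hW
    have hconj := conj_formula e x g hg (a.map (zmap e he))
    have hEq : (a.map (zmap e he) : Matrix (Fin n) (Fin n) (LaurentSeries k)).map (tauU e)
        + diagQ x * a.map (zmap e he) - a.map (zmap e he) * diagQ x = m' := by
      have hcc : g⁻¹ * ((a.map (zmap e he) :
            Matrix (Fin n) (Fin n) (LaurentSeries k)).map (tauU e)
            + diagQ x * a.map (zmap e he) - a.map (zmap e he) * diagQ x) * g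
          = g⁻¹ * m' * g := by
        rw [hconj, hm'W]
      calc (a.map (zmap e he) : Matrix (Fin n) (Fin n) (LaurentSeries k)).map (tauU e)
            + diagQ x * a.map (zmap e he) - a.map (zmap e he) * diagQ x
          = g * (g⁻¹ * ((a.map (zmap e he) :
              Matrix (Fin n) (Fin n) (LaurentSeries k)).map (tauU e)
              + diagQ x * a.map (zmap e he) - a.map (zmap e he) * diagQ x) * g) * g⁻¹ :=
            (sandwich' g g⁻¹ h1 h2 _).symm
      _ = g * (g⁻¹ * m' * g) * g⁻¹ := by rw [hcc]
      _ = m' := sandwich' g g⁻¹ h1 h2 m'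
    have hfin : (a.map tauF + diagQ x * a - a * diagQ x).map (zmap e he)
        ∈ Submodule.span (LaurentSeries k)
        ((fun A : Matrix (Fin n) (Fin n) (LaurentSeries k) =>
          A.map (zmap e he)) '' (s : Set (Matrix (Fin n) (Fin n) (LaurentSeries k)))) := by
      rw [phi_DF e he x a, hEq]
      exact hm'
    exact descent e he s _ hfin
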